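/- Let m, n ≥ 0 be integers with p = 2m+n ≥ 2, and let G be a finite simple graph such that every (m,n)-colored mixed graph with underlying graph G admits a homomorphism to some (m,n)-colored mixed graph on at most k vertices. Then the arboricity of G satisfies arb(G) ≤ ⌈log_p k + k/2⌉. -/

import Mathlib

/-- The possible kinds of links from a vertex `u` to a vertex `v` in an
`(m,n)`-colored mixed graph: an arc `u → v` of one of `m` colors, an arc
`v → u` of one of `m` colors, or an (unoriented) edge of one of `n` colors. -/
inductive Link (m n : ℕ) : Type where
  | arcOut : Fin m → Link m n
  | arcIn : Fin m → Link m n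
  | edge : Fin n → Link m n

/-- The link as seen from the other endpoint. -/
def Link.flip {m n : ℕ} : Link m n → Link m n
  | .arcOut c => .arcIn c
  | .arcIn c => .arcOut c
  | .edge c => .edge c

/-- An `(m,n)`-colored mixed graph on vertex type `V`: between any two distinct
vertices there is at most one link (a colored arc in either direction or a
colored edge), and there are no loops. -/
structure CMGraph (m n : ℕ) (V : Type) where
  link : V → V → Option (Link m n)
  symm : ∀ u v, link v u = (link u v).map Link.flip
  loopless : ∀ v, link v v = none

/-- The underlying simple graph of an `(m,n)`-colored mixed graph. -/
def CMGraph.underlying {m n : ℕ} {V : Type} (G : CMGraph m n V) : SimpleGraph V where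
  Adj u v := (G.link u v).isSome
  symm := by
    refine ⟨?_⟩
    intro u v h
    beta_reduce at h ⊢
    rw [G.symm u v]
    rcases hx : G.link u v with _ | l
    · rw [hx] at h; simp at h
    · simp
  loopless := by
    refine ⟨?_⟩
    intro v h
    beta_reduce at h ⊢
    rw [G.loopless v] at h
    simp at h

/-- A homomorphism of `(m,n)`-colored mixed graphs: arcs map to arcs of the same
color and direction, edges map to edges of the same color. -/
def IsCMHom {m n : ℕ} {V W : Type} (G : CMGraph m n V) (H : CMGraph m n W)
    (f : V → W) : Prop :=
  ∀ u v l, G.link u v = some l → H.link (f u) (f v) = some l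

/-- `G` admits a homomorphism to some `(m,n)`-colored mixed graph on at most `k`
vertices, i.e. `χ_{(m,n)}(G) ≤ k`. -/
def CMChromAtMost {m n : ℕ} {V : Type} (G : CMGraph m n V) (k : ℕ) : Prop :=
  ∃ (W : Type) (inst : Fintype W) (H : CMGraph m n W) (f : V → W),
    @Fintype.card W inst ≤ k ∧ IsCMHom G H f

/-- Every `(m,n)`-colored mixed graph admitting a homomorphism from `G` has at
least `k` vertices, i.e. `χ_{(m,n)}(G) ≥ k`. -/
def CMChromAtLeast {m n : ℕ} {V : Type} (G : CMGraph m n V) (k : ℕ) : Prop :=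
  ∀ (W : Type) (inst : Fintype W) (H : CMGraph m n W) (f : V → W),
    IsCMHom G H f → k ≤ @Fintype.card W inst

/-- The acyclic chromatic number of `G` is at most `k`: there is a proper
`k`-coloring in which the union of any two color classes induces a forest. -/
def AcycChromAtMost {V : Type} (G : SimpleGraph V) (k : ℕ) : Prop :=
  ∃ c : V → Fin k, (∀ u v, G.Adj u v → c u ≠ c v) ∧
    ∀ i j : Fin k, (G.induce {v | c v = i ∨ c v = j}).IsAcyclic

/-- The edge set of `G` can be decomposed into `r` forests. -/
def ArbAtMost {V : Type} (G : SimpleGraph V) (r : ℕ) : Prop :=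
  ∃ F : Fin r → SimpleGraph V,
    (∀ i, F i ≤ G) ∧
    (∀ i, (F i).IsAcyclic) ∧
    (∀ u v, G.Adj u v → ∃ i, (F i).Adj u v) ∧
    (∀ i j, i ≠ j → ∀ u v, ¬ ((F i).Adj u v ∧ (F j).Adj u v))

/-- Every vertex of `G` has degree at most `d`. -/
def MaxDegAtMost {V : Type} (G : SimpleGraph V) (d : ℕ) : Prop :=
  ∀ v, (G.neighborSet v).ncard ≤ d

/-- `G` is `d`-degenerate: every nonempty (induced) subgraph has a vertex of
degree at most `d` in it. -/
def DegenAtMost {V : Type} (G : SimpleGraph V) (d : ℕ) : Prop :=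
  ∀ s : Set V, s.Nonempty → ∃ v ∈ s, (G.neighborSet v ∩ s).ncard ≤ d




open SimpleGraph

variable {V : Type} 

/-- deleting an edge: adjacency -/
lemma sdiff_edge_adj (G : SimpleGraph V) (e : Sym2 V) (a b : V) :
    (G \ fromEdgeSet {e}).Adj a b ↔ G.Adj a b ∧ s(a, b) ≠ e := by
  simp only [sdiff_adj, fromEdgeSet_adj, Set.mem_singleton_iff]
  constructor
  · rintro ⟨h1, h2⟩
    exact ⟨h1, fun h => h2 ⟨h, h1.ne⟩⟩
  · rintro ⟨h1, h2⟩
    exact ⟨h1, fun h => h2 h.1⟩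

/-- acyclicity is antitone -/
lemma IsAcyclic.mono' {G H : SimpleGraph V} (hle : H ≤ G) (hG : G.IsAcyclic) : H.IsAcyclic := by
  intro v c hc
  exact hG (c.mapLe hle) (hc.mapLe hle)

/-- adding an edge between non-reachable vertices keeps acyclicity -/
lemma IsAcyclic.sup_edge' {F : SimpleGraph V} (hF : F.IsAcyclic) {x y : V}
    (hreach : ¬ F.Reachable x y) : (F ⊔ edge x y).IsAcyclic := by
  have hxy : x ≠ y := by rintro rfl; exact hreach (Reachable.refl x)
  intro v c hc
  by_cases he : s(x, y) ∈ c.edges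
  · have h2 : ((F ⊔ edge x y) \ fromEdgeSet {s(x, y)}).Reachable x y := by
      have := (adj_and_reachable_delete_edges_iff_exists_cycle
        (G := F ⊔ edge x y) (v := x) (w := y)).2 ⟨v, c, hc, he⟩
      exact this.2
    apply hreach
    refine h2.mono ?_
    intro a b hab
    rw [sdiff_edge_adj] at hab
    rcases hab with ⟨hab, hne⟩
    cases hab with
    | inl h => exact h
    | inr h => exact absurd ((edge_adj x y a b).1 h).1 (by
        rintro (⟨rfl, rfl⟩ | ⟨rfl, rfl⟩)
        · exact hne rfl
        · exact hne (Sym2.eq_swap))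
  · have hsub : ∀ e' ∈ c.edges, e' ∈ F.edgeSet := by
      intro e' he'
      have := c.edges_subset_edgeSet he'
      rw [edgeSet_sup] at this
      rcases this with h | h
      · exact h
      · exfalso
        rw [edge_edgeSet_of_ne hxy] at h
        rw [Set.mem_singleton_iff] at h
        exact he (h ▸ he')
    exact hF (c.transfer F hsub) (hc.transfer hsub)


/-- In an acyclic graph, every edge on a path between u,v is a bridge for u,v. -/
lemma acyclic_path_edge_bridge {F : SimpleGraph V} (hF : F.IsAcyclic) {u v : V}
    (p : F.Walk u v) (hp : p.IsPath) {e : Sym2 V} (he : e ∈ p.edges) :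
    ¬ (F \ fromEdgeSet {e}).Reachable u v := by
  classical
  rintro ⟨q⟩
  have hq : ∀ e' ∈ q.edges, e' ∈ F.edgeSet := by
    intro e' he'
    have := q.edges_subset_edgeSet he'
    rw [edgeSet_sdiff] at this
    exact this.1
  have hqe : e ∉ q.edges := by
    intro hmem
    have h1 := q.edges_subset_edgeSet hmem
    rw [edgeSet_sdiff, edgeSet_fromEdgeSet] at h1
    exact h1.2 ⟨rfl, F.not_isDiag_of_mem_edgeSet h1.1⟩
  -- transfer q to F
  let q' := (q.transfer F hq).toPath
  have hq'e : e ∉ (q' : F.Walk u v).edges := by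
    intro hmem
    have := Walk.edges_toPath_subset (q.transfer F hq) hmem
    rw [Walk.edges_transfer] at this
    exact hqe this
  have := hF.path_unique ⟨p, hp⟩ q'
  rw [← this] at hq'e
  exact hq'e he

/-- conversely: if e is a bridge for u,v then e is on every path -/
lemma bridge_mem_path_edges {F : SimpleGraph V} {u v : V} {e : Sym2 V}
    (hbr : ¬ (F \ fromEdgeSet {e}).Reachable u v) (p : F.Walk u v) : e ∈ p.edges := by
  by_contra hne
  apply hbr
  refine ⟨p.transfer _ ?_⟩
  intro e' he'
  rw [edgeSet_sdiff, edgeSet_fromEdgeSet]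
  constructor
  · exact p.edges_subset_edgeSet he'
  · simp only [Set.mem_diff, Set.mem_singleton_iff, not_and]
    intro h
    exact absurd (h ▸ he') hne

/-- each vertex of a walk is the start or an endpoint of some edge -/
lemma walk_support_mem {F : SimpleGraph V} {u v : V} (p : F.Walk u v) :
    ∀ z ∈ p.support, z = u ∨ ∃ e ∈ p.edges, z ∈ e := by
  induction p with
  | nil => intro z hz; left; simpa using hz
  | @cons a b c h q ih =>
    intro z hz
    rw [Walk.support_cons, List.mem_cons] at hz
    rcases hz with rfl | hz
    · left; rfl
    · rcases ih z hz with rfl | ⟨e, he, hze⟩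
      · right; exact ⟨s(a, z), by simp, Sym2.mem_mk_right a z⟩
      · right; exact ⟨e, by simp [he], hze⟩

/-- a walk whose support lies in S gives reachability in the induced graph -/
lemma reachable_induce_of_walk {F : SimpleGraph V} {S : Set V} {u v : V}
    (p : F.Walk u v) (hsupp : ∀ z ∈ p.support, z ∈ S) (hu : u ∈ S) (hv : v ∈ S) :
    (F.induce S).Reachable ⟨u, hu⟩ ⟨v, hv⟩ := by
  induction p with
  | nil => rfl
  | @cons a b c h q ih =>
    have hb : b ∈ S := hsupp b (by simp)
    have : (F.induce S).Adj ⟨a, hu⟩ ⟨b, hb⟩ := h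
    refine (this.reachable).trans (ih ?_ hb hv)
    intro z hz
    exact hsupp z (by simp [hz])

/-- induced subgraph of acyclic is acyclic -/
lemma IsAcyclic.induce' {F : SimpleGraph V} (hF : F.IsAcyclic) (S : Set V) :
    (F.induce S).IsAcyclic := by
  intro v c hc
  let f : F.induce S →g F := ⟨Subtype.val, fun h => h⟩
  have hinj : Function.Injective f := Subtype.val_injective
  exact hF (c.map f) (hc.map hinj)


lemma reachable_sup_edge_cases {F : SimpleGraph V} {x y p q : V}
    (h : (F ⊔ edge x y).Reachable p q) :
    F.Reachable p q ∨ (F.Reachable p x ∧ F.Reachable y q) ∨ (F.Reachable p y ∧ F.Reachable x q) := by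
  obtain ⟨w⟩ := h
  induction w with
  | nil => left; rfl
  | @cons a b c h w ih =>
    have hab : F.Adj a b ∨ ((a = x ∧ b = y) ∨ (a = y ∧ b = x)) := by
      cases h with
      | inl h => exact Or.inl h
      | inr h => exact Or.inr ((edge_adj x y a b).1 h).1
    rcases hab with hab | ⟨rfl, rfl⟩ | ⟨rfl, rfl⟩
    · rcases ih with h1 | ⟨h1, h2⟩ | ⟨h1, h2⟩
      · exact Or.inl (hab.reachable.trans h1)
      · exact Or.inr (Or.inl ⟨hab.reachable.trans h1, h2⟩)
      · exact Or.inr (Or.inr ⟨hab.reachable.trans h1, h2⟩)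
    · rcases ih with h1 | ⟨h1, h2⟩ | ⟨h1, h2⟩
      · exact Or.inr (Or.inl ⟨Reachable.refl _, h1⟩)
      · exact Or.inr (Or.inl ⟨Reachable.refl _, h2⟩)
      · exact Or.inl h2
    · rcases ih with h1 | ⟨h1, h2⟩ | ⟨h1, h2⟩
      · exact Or.inr (Or.inr ⟨Reachable.refl _, h1⟩)
      · exact Or.inl h2
      · exact Or.inr (Or.inr ⟨Reachable.refl _, h2⟩)

/-- adding an edge (between F-unreachable u,v) does not repair an (a,b)-deletion
disconnection between p and q, provided p,q were F-reachable. -/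
lemma bridge_stable_sup_edge {F : SimpleGraph V} {u v p q : V} {e : Sym2 V}
    (hpq : F.Reachable p q) (huv : ¬ F.Reachable u v)
    (h2 : ¬ (F \ fromEdgeSet {e}).Reachable p q) :
    ¬ ((F ⊔ edge u v) \ fromEdgeSet {e}).Reachable p q := by
  intro hreach
  have hle : (F ⊔ edge u v) \ fromEdgeSet {e} ≤ (F \ fromEdgeSet {e}) ⊔ edge u v := by
    intro a b hab
    rcases hab with ⟨hab1, hab2⟩
    cases hab1 with
    | inl h => exact Or.inl ⟨h, hab2⟩
    | inr h => exact Or.inr h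
  have := reachable_sup_edge_cases (hreach.mono hle)
  have hmono : (F \ fromEdgeSet {e}) ≤ F := sdiff_le
  rcases this with h1 | ⟨h1, h2'⟩ | ⟨h1, h2'⟩
  · exact h2 h1
  · exact huv ((h1.mono hmono).symm.trans (hpq.trans (h2'.mono hmono).symm))
  · exact huv (((h2'.mono hmono).trans (hpq.symm)).trans (h1.mono hmono))


def Blk (F : SimpleGraph V) (u v a b : V) : Prop :=
  F.Reachable u v ∧ ¬ (F \ fromEdgeSet {s(a, b)}).Reachable u v

structure NWValid (G : SimpleGraph V) {r : ℕ} (x y : V) (F : Fin r → SimpleGraph V) : Prop where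
  le : ∀ i, F i ≤ G
  acyc : ∀ i, (F i).IsAcyclic
  nxy : ∀ i, ¬ (F i).Adj x y
  cover : ∀ u v, G.Adj u v → s(u, v) ≠ s(x, y) → ∃ i, (F i).Adj u v
  disj : ∀ i j, i ≠ j → ∀ u v, ¬ ((F i).Adj u v ∧ (F j).Adj u v)

inductive RSeq {r : ℕ} (F : Fin r → SimpleGraph V) (x y : V) : ℕ → V → V → Prop
  | base : RSeq F x y 0 x y
  | step {t : ℕ} {u v a b : V} (i : Fin r) :
      RSeq F x y t u v → (F i).Adj a b → Blk (F i) u v a b → RSeq F x y (t + 1) a b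

def FullDecomp (G : SimpleGraph V) (r : ℕ) (F : Fin r → SimpleGraph V) : Prop :=
  (∀ i, F i ≤ G) ∧ (∀ i, (F i).IsAcyclic) ∧
    (∀ u v, G.Adj u v → ∃ i, (F i).Adj u v) ∧
    (∀ i j, i ≠ j → ∀ u v, ¬ ((F i).Adj u v ∧ (F j).Adj u v))

/-- helper: sym2 equality cases -/
lemma sym2_eq_cases {a b u v : V} (h : s(a, b) = s(u, v)) :
    (a = u ∧ b = v) ∨ (a = v ∧ b = u) := by
  rw [Sym2.eq_iff] at h; tauto

lemma edge_le_of_adj {G : SimpleGraph V} {u v : V} (h : G.Adj u v) : edge u v ≤ G := by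
  intro a b hab
  rcases ((edge_adj u v a b).1 hab).1 with ⟨rfl, rfl⟩ | ⟨rfl, rfl⟩
  · exact h
  · exact h.symm

lemma adj_sup_edge_iff {F : SimpleGraph V} {u v a b : V} (huv : u ≠ v) :
    (F ⊔ edge u v).Adj a b ↔ F.Adj a b ∨ (s(a, b) = s(u, v)) := by
  constructor
  · rintro (h | h)
    · exact Or.inl h
    · rcases ((edge_adj u v a b).1 h).1 with ⟨rfl, rfl⟩ | ⟨rfl, rfl⟩
      · exact Or.inr rfl
      · exact Or.inr (Sym2.eq_swap)
  · rintro (h | h)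
    · exact Or.inl h
    · right
      rw [edge_adj]
      rcases sym2_eq_cases h with ⟨rfl, rfl⟩ | ⟨rfl, rfl⟩
      · exact ⟨Or.inl ⟨rfl, rfl⟩, huv⟩
      · exact ⟨Or.inr ⟨rfl, rfl⟩, fun hh => huv hh.symm⟩

section Swap

variable {G : SimpleGraph V} {r : ℕ} {x y u v : V} {F : Fin r → SimpleGraph V} {c j : Fin r}

/-- move the edge (u,v) from class c to class j -/
def swapF (F : Fin r → SimpleGraph V) (c j : Fin r) (u v : V) : Fin r → SimpleGraph V :=
  fun i => if i = c then F c \ fromEdgeSet {s(u, v)}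
    else if i = j then F j ⊔ edge u v else F i

lemma swap_valid (hval : NWValid G x y F) (hcadj : (F c).Adj u v)
    (hins : ¬ (F j).Reachable u v) : NWValid G x y (swapF F c j u v) := by
  have hcj : c ≠ j := by rintro rfl; exact hins hcadj.reachable
  have huv : u ≠ v := hcadj.ne
  have hGuv : G.Adj u v := hval.le c hcadj
  constructor
  · intro i
    unfold swapF
    split_ifs with h1 h2
    · exact le_trans sdiff_le (hval.le c)
    · exact sup_le (hval.le j) (edge_le_of_adj hGuv)
    · exact hval.le i
  · intro i
    unfold swapF
    split_ifs with h1 h2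
    · exact IsAcyclic.mono' sdiff_le (hval.acyc c)
    · exact IsAcyclic.sup_edge' (hval.acyc j) hins
    · exact hval.acyc i
  · intro i
    unfold swapF
    split_ifs with h1 h2
    · intro h; exact hval.nxy c ((sdiff_edge_adj _ _ _ _).1 h).1
    · intro h
      rcases (adj_sup_edge_iff huv).1 h with h' | h'
      · exact hval.nxy j h'
      · rcases sym2_eq_cases h' with ⟨rfl, rfl⟩ | ⟨rfl, rfl⟩
        · exact hval.nxy c hcadj
        · exact hval.nxy c hcadj.symm
    · exact hval.nxy i
  · intro a b hab hne
    by_cases he : s(a, b) = s(u, v)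
    · refine ⟨j, ?_⟩
      unfold swapF
      rw [if_neg hcj.symm, if_pos rfl]
      exact (adj_sup_edge_iff huv).2 (Or.inr he)
    · obtain ⟨i, hi⟩ := hval.cover a b hab hne
      by_cases hic : i = c
      · subst hic
        refine ⟨i, ?_⟩
        unfold swapF
        rw [if_pos rfl]
        exact (sdiff_edge_adj _ _ _ _).2 ⟨hi, he⟩
      · refine ⟨i, ?_⟩
        unfold swapF
        rw [if_neg hic]
        split_ifs with h2
        · subst h2; exact Or.inl hi
        · exact hi
  · -- disjointness
    intro i1 i2 hne a b ⟨h1, h2⟩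
    -- characterize adjacency in swapF
    have key : ∀ i, (swapF F c j u v i).Adj a b →
        (s(a, b) = s(u, v) ∧ i = j) ∨ (s(a, b) ≠ s(u, v) ∧ (F i).Adj a b) := by
      intro i hadj
      unfold swapF at hadj
      split_ifs at hadj with hh1 hh2
      · right
        have := (sdiff_edge_adj _ _ _ _).1 hadj
        exact ⟨this.2, hh1 ▸ this.1⟩
      · rcases (adj_sup_edge_iff huv).1 hadj with h' | h'
        · by_cases he : s(a, b) = s(u, v)
          · exfalso
            rcases sym2_eq_cases he with ⟨rfl, rfl⟩ | ⟨rfl, rfl⟩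
            · exact hins h'.reachable
            · exact hins h'.symm.reachable
          · subst hh2; exact Or.inr ⟨he, h'⟩
        · exact Or.inl ⟨h', hh2⟩
      · right
        constructor
        · intro he
          rcases sym2_eq_cases he with ⟨rfl, rfl⟩ | ⟨rfl, rfl⟩
          · exact hval.disj i c hh1 a b ⟨hadj, hcadj⟩
          · exact hval.disj i c hh1 b a ⟨hadj.symm, hcadj⟩
        · exact hadj
    rcases key i1 h1 with ⟨he1, rfl⟩ | ⟨he1, hF1⟩
    · rcases key i2 h2 with ⟨he2, rfl⟩ | ⟨he2, hF2⟩
      · exact hne rfl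
      · exact he2 he1
    · rcases key i2 h2 with ⟨he2, rfl⟩ | ⟨he2, hF2⟩
      · exact he1 he2
      · exact hval.disj i1 i2 hne a b ⟨hF1, hF2⟩

end Swap

section Transfer

variable {G : SimpleGraph V} {r : ℕ} {x y u v : V} {F : Fin r → SimpleGraph V} {c j : Fin r}

lemma swapF_c : swapF F c j u v c = F c \ fromEdgeSet {s(u, v)} := if_pos rfl

lemma swapF_j (hcj : c ≠ j) : swapF F c j u v j = F j ⊔ edge u v := by
  unfold swapF; rw [if_neg hcj.symm, if_pos rfl]

lemma swapF_other {i : Fin r} (hic : i ≠ c) (hij : i ≠ j) : swapF F c j u v i = F i := by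
  unfold swapF; rw [if_neg hic, if_neg hij]

lemma rseq_transfer {t : ℕ} (hval : NWValid G x y F)
    (hcadj : (F c).Adj u v) (hins : ¬ (F j).Reachable u v)
    (hno : ∀ τ, τ ≤ t → ∀ a b, RSeq F x y τ a b → ∀ j', (F j').Reachable a b) :
    ∀ {τ a b}, RSeq F x y τ a b → τ ≤ t → RSeq (swapF F c j u v) x y τ a b := by
  have hcj : c ≠ j := by rintro rfl; exact hins hcadj.reachable
  intro τ a b h
  induction h with
  | base => intro _; exact .base
  | @step t' u' v' a b i hprev hadj hblk ih =>
    intro hle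
    have ht' : t' ≤ t := le_trans (Nat.le_succ t') hle
    have prev' := ih ht'
    have hne : s(a, b) ≠ s(u, v) := by
      intro he
      have hreach := hno (t' + 1) hle a b (.step i hprev hadj hblk) j
      rcases sym2_eq_cases he with ⟨rfl, rfl⟩ | ⟨rfl, rfl⟩
      · exact hins hreach
      · exact hins hreach.symm
    by_cases hic : i = c
    · subst hic
      have hreach2 : (F i \ fromEdgeSet {s(u, v)}).Reachable u' v' := by
        by_contra hnr
        have hseq2 : RSeq F x y (t' + 1) u v := .step i hprev hcadj ⟨hblk.1, hnr⟩
        exact hins (hno (t' + 1) hle u v hseq2 j)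
      refine .step i prev' ?_ ?_
      · rw [swapF_c]
        exact (sdiff_edge_adj _ _ _ _).2 ⟨hadj, hne⟩
      · rw [swapF_c]
        refine ⟨hreach2, ?_⟩
        intro hr
        apply hblk.2
        refine hr.mono ?_
        intro p q hpq
        have h1 := (sdiff_edge_adj _ _ _ _).1 hpq
        have h2 := (sdiff_edge_adj _ _ _ _).1 h1.1
        exact (sdiff_edge_adj _ _ _ _).2 ⟨h2.1, h1.2⟩
    · by_cases hij : i = j
      · subst hij
        refine .step i prev' ?_ ?_
        · rw [swapF_j hcj]
          exact Or.inl hadj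
        · rw [swapF_j hcj]
          exact ⟨hblk.1.mono le_sup_left, bridge_stable_sup_edge hblk.1 hins hblk.2⟩
      · refine .step i prev' ?_ ?_
        · rw [swapF_other hic hij]; exact hadj
        · rw [swapF_other hic hij]; exact hblk

end Transfer

section Augment

variable {G : SimpleGraph V} {r : ℕ} {x y : V}

lemma insert_final (hGxy : G.Adj x y) {F : Fin r → SimpleGraph V} (hval : NWValid G x y F)
    {j : Fin r} (hins : ¬ (F j).Reachable x y) :
    ∃ F', FullDecomp G r F' := by
  classical
  have hxy : x ≠ y := hGxy.ne
  refine ⟨fun i => if i = j then F j ⊔ edge x y else F i, ?_, ?_, ?_, ?_⟩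
  · intro i
    dsimp only
    split_ifs with h
    · exact sup_le (hval.le j) (edge_le_of_adj hGxy)
    · exact hval.le i
  · intro i
    dsimp only
    split_ifs with h
    · exact IsAcyclic.sup_edge' (hval.acyc j) hins
    · exact hval.acyc i
  · intro a b hab
    by_cases he : s(a, b) = s(x, y)
    · refine ⟨j, ?_⟩
      dsimp only
      rw [if_pos rfl]
      exact (adj_sup_edge_iff hxy).2 (Or.inr he)
    · obtain ⟨i, hi⟩ := hval.cover a b hab he
      refine ⟨i, ?_⟩
      dsimp only
      split_ifs with h
      · subst h; exact Or.inl hi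
      · exact hi
  · intro i1 i2 hne a b ⟨h1, h2⟩
    have key : ∀ i, (if i = j then F j ⊔ edge x y else F i).Adj a b →
        (s(a, b) = s(x, y) ∧ i = j) ∨ (s(a, b) ≠ s(x, y) ∧ (F i).Adj a b) := by
      intro i hadj
      have hnotxy : ∀ i', ¬ ((F i').Adj a b ∧ s(a, b) = s(x, y)) := by
        rintro i' ⟨hadj', he⟩
        rcases sym2_eq_cases he with ⟨rfl, rfl⟩ | ⟨rfl, rfl⟩
        · exact hval.nxy i' hadj'
        · exact hval.nxy i' hadj'.symm
      split_ifs at hadj with hh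
      · rcases (adj_sup_edge_iff hxy).1 hadj with h' | h'
        · right
          exact ⟨fun he => hnotxy j ⟨h', he⟩, hh ▸ h'⟩
        · exact Or.inl ⟨h', hh⟩
      · right
        exact ⟨fun he => hnotxy i ⟨hadj, he⟩, hadj⟩
    rcases key i1 h1 with ⟨he1, rfl⟩ | ⟨he1, hF1⟩
    · rcases key i2 h2 with ⟨he2, rfl⟩ | ⟨he2, hF2⟩
      · exact hne rfl
      · exact he2 he1
    · rcases key i2 h2 with ⟨he2, rfl⟩ | ⟨he2, hF2⟩
      · exact he1 he2
      · exact hval.disj i1 i2 hne a b ⟨hF1, hF2⟩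

lemma augment (hGxy : G.Adj x y) :
    ∀ t (F : Fin r → SimpleGraph V), NWValid G x y F →
      ∀ u v, RSeq F x y t u v → (∃ j, ¬ (F j).Reachable u v) →
      ∃ F', FullDecomp G r F' := by
  intro t
  induction t using Nat.strong_induction_on with
  | _ t IH =>
  rintro F hval u v hseq ⟨j, hins⟩
  cases hseq with
  | base => exact insert_final hGxy hval hins
  | @step t' u' v' a b i hprev hadj hblk =>
    by_cases hno : ∃ τ, τ ≤ t' ∧ ∃ a' b', RSeq F x y τ a' b' ∧ ∃ j', ¬ (F j').Reachable a' b'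
    · obtain ⟨τ, hτ, a', b', hseq', j', hins'⟩ := hno
      exact IH τ (lt_of_le_of_lt hτ (Nat.lt_succ_self t')) F hval a' b' hseq' ⟨j', hins'⟩
    · push_neg at hno
      have hno' : ∀ τ, τ ≤ t' → ∀ a' b', RSeq F x y τ a' b' → ∀ j', (F j').Reachable a' b' := by
        intro τ hτ a' b' hs j'
        exact hno τ hτ a' b' hs j'
      have hval' := swap_valid hval hadj hins
      have prev' := rseq_transfer hval hadj hins hno' hprev le_rfl
      have ins' : ¬ ((swapF F i j u v) i).Reachable u' v' := by
        rw [swapF_c]; exact hblk.2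
      exact IH t' (Nat.lt_succ_self t') (swapF F i j u v) hval' u' v' prev' ⟨i, ins'⟩

end Augment

def Density (G : SimpleGraph V) (r : ℕ) : Prop :=
  ∀ s : Set V, s.Nonempty → Nat.card (SimpleGraph.induce s G).edgeSet ≤ r * (Nat.card s - 1)

section Fail

variable [Fintype V] {G : SimpleGraph V} {r : ℕ} {x y : V} {F : Fin r → SimpleGraph V}

lemma fail_contra (hGxy : G.Adj x y) (hval : NWValid G x y F)
    (hfail : ∀ t u v, RSeq F x y t u v → ∀ j, (F j).Reachable u v)
    (hdens : Density G r) : False := by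
  classical
  set S : Set V := {w | ∃ t a b, RSeq F x y t a b ∧ (w = a ∨ w = b)} with hS
  have hxS : x ∈ S := ⟨0, x, y, .base, Or.inl rfl⟩
  have hyS : y ∈ S := ⟨0, x, y, .base, Or.inr rfl⟩
  set ESet : Set (Sym2 V) := {e | ∃ t a b, RSeq F x y t a b ∧ e = s(a, b)} with hE
  -- edges of paths between reached pairs are reached
  have c2 : ∀ {t a b}, RSeq F x y t a b → ∀ (i : Fin r) (p : (F i).Walk a b), p.IsPath →
      ∀ e ∈ p.edges, e ∈ ESet := by
    intro t a b hseq i p hp e he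
    induction e with
    | _ c d =>
      have hadj : (F i).Adj c d := p.adj_of_mem_edges he
      have hblk : Blk (F i) a b c d :=
        ⟨hfail t a b hseq i, acyclic_path_edge_bridge (hval.acyc i) p hp he⟩
      exact ⟨t + 1, c, d, .step i hseq hadj hblk, rfl⟩
  have memS : ∀ e ∈ ESet, ∀ c d : V, e = s(c, d) → c ∈ S ∧ d ∈ S := by
    rintro e ⟨t, a, b, hseq, rfl⟩ c d hcd
    rcases sym2_eq_cases hcd.symm with ⟨rfl, rfl⟩ | ⟨rfl, rfl⟩
    · exact ⟨⟨t, c, d, hseq, Or.inl rfl⟩, ⟨t, c, d, hseq, Or.inr rfl⟩⟩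
    · exact ⟨⟨t, d, c, hseq, Or.inr rfl⟩, ⟨t, d, c, hseq, Or.inl rfl⟩⟩
  -- endpoints of any reached pair are connected in every induced forest
  have conn_ab : ∀ {t a b}, RSeq F x y t a b → ∀ (i : Fin r) (ha : a ∈ S) (hb : b ∈ S),
      ((F i).induce S).Reachable ⟨a, ha⟩ ⟨b, hb⟩ := by
    intro t a b hseq i ha hb
    obtain ⟨w⟩ := hfail t a b hseq i
    have hp := w.toPath.2
    set p : (F i).Walk a b := w.toPath.1 with hpdef
    have hsupp : ∀ z ∈ p.support, z ∈ S := by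
      intro z hz
      rcases walk_support_mem p z hz with rfl | ⟨e, he, hze⟩
      · exact ha
      · have heE : e ∈ ESet := c2 hseq i p hp e he
        induction e with
        | _ c d =>
          rcases Sym2.mem_iff.1 hze with rfl | rfl
          · exact (memS _ heE z d rfl).1
          · exact (memS _ heE c z rfl).2
    exact reachable_induce_of_walk p hsupp ha hb
  have connE : ∀ e ∈ ESet, ∀ (c d : V) (hcd : e = s(c, d)) (i : Fin r) (hc : c ∈ S) (hd : d ∈ S),
      ((F i).induce S).Reachable ⟨c, hc⟩ ⟨d, hd⟩ := by
    rintro e ⟨t, a, b, hseq, rfl⟩ c d hcd i hc hd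
    rcases sym2_eq_cases hcd.symm with ⟨rfl, rfl⟩ | ⟨rfl, rfl⟩
    · exact conn_ab hseq i hc hd
    · exact (conn_ab hseq i hd hc).symm
  -- walks all of whose edges are reached connect their endpoints in every induced forest
  have walkE : ∀ (i0 : Fin r) (z1 z2 : V) (q : (F i0).Walk z1 z2),
      (∀ e ∈ q.edges, e ∈ ESet) → ∀ (i : Fin r) (h1 : z1 ∈ S) (h2 : z2 ∈ S),
      ((F i).induce S).Reachable ⟨z1, h1⟩ ⟨z2, h2⟩ := by
    intro i0 z1 z2 q
    induction q with
    | nil => intro _ i h1 h2; rfl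
    | @cons a m c hadj rest ih =>
      intro hqE i h1 h2
      have hmE : s(a, m) ∈ ESet := hqE _ (by simp)
      have hm : m ∈ S := (memS _ hmE a m rfl).2
      exact (connE _ hmE a m rfl i h1 hm).trans (ih (fun e he => hqE e (by simp [he])) i hm h2)
  -- every vertex of S is connected to x in every induced forest
  have c5 : ∀ {t a b}, RSeq F x y t a b → ∀ (i : Fin r) (ha : a ∈ S) (hb : b ∈ S),
      ((F i).induce S).Reachable ⟨a, ha⟩ ⟨x, hxS⟩ ∧
      ((F i).induce S).Reachable ⟨b, hb⟩ ⟨x, hxS⟩ := by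
    intro t a b hseq
    induction hseq with
    | base =>
      intro i ha hb
      exact ⟨Reachable.refl _, (conn_ab (RSeq.base) i hxS hb).symm⟩
    | @step t' u' v' a b i0 hprev hadj hblk ih =>
      intro i ha hb
      have hu' : u' ∈ S := ⟨t', u', v', hprev, Or.inl rfl⟩
      have hv' : v' ∈ S := ⟨t', u', v', hprev, Or.inr rfl⟩
      obtain ⟨w⟩ := hfail t' u' v' hprev i0
      have hp := w.toPath.2
      set p : (F i0).Walk u' v' := w.toPath.1 with hpdef
      have hmem : s(a, b) ∈ p.edges := bridge_mem_path_edges hblk.2 p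
      have haP : a ∈ p.support := p.fst_mem_support_of_mem_edges hmem
      have hbP : b ∈ p.support := p.snd_mem_support_of_mem_edges hmem
      have hedges : ∀ e ∈ p.edges, e ∈ ESet := c2 hprev i0 p hp
      have hqa : ((F i).induce S).Reachable ⟨u', hu'⟩ ⟨a, ha⟩ := by
        refine walkE i0 u' a (p.takeUntil a haP) ?_ i hu' ha
        intro e he
        exact hedges e (p.edges_takeUntil_subset haP he)
      have hqb : ((F i).induce S).Reachable ⟨u', hu'⟩ ⟨b, hb⟩ := by
        refine walkE i0 u' b (p.takeUntil b hbP) ?_ i hu' hb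
        intro e he
        exact hedges e (p.edges_takeUntil_subset hbP he)
      have hux := (ih i hu' hv').1
      exact ⟨hqa.symm.trans hux, hqb.symm.trans hux⟩
  -- now set up the counting
  letI : Fintype ↥S := (Set.toFinite S).fintype
  have hconn : ∀ i : Fin r, ((F i).induce S).Connected := by
    intro i
    have hpre : ((F i).induce S).Preconnected := by
      rintro ⟨z, hz⟩ ⟨w, hw⟩
      have key : ∀ (z : V) (hz : z ∈ S), ((F i).induce S).Reachable ⟨z, hz⟩ ⟨x, hxS⟩ := by
        intro z hz
        obtain ⟨t, a, b, hseq, hzab⟩ := hz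
        rcases hzab with rfl | rfl
        · exact (c5 hseq i (⟨t, _, b, hseq, Or.inl rfl⟩ : z ∈ S)
            (⟨t, _, b, hseq, Or.inr rfl⟩ : b ∈ S)).1
        · exact (c5 hseq i (⟨t, a, _, hseq, Or.inl rfl⟩ : a ∈ S)
            (⟨t, a, _, hseq, Or.inr rfl⟩ : z ∈ S)).2
      have hzx := key z hz
      have hwx := key w hw
      exact hzx.trans hwx.symm
    haveI : Nonempty ↥S := ⟨⟨x, hxS⟩⟩
    exact Connected.mk hpre
  have htree : ∀ i : Fin r, ((F i).induce S).IsTree := by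
    intro i
    exact ⟨hconn i, IsAcyclic.induce' (hval.acyc i) S⟩
  have hcard : ∀ i : Fin r, ((F i).induce S).edgeFinset.card + 1 = Fintype.card ↥S :=
    fun i => (htree i).card_edgeFinset
  -- the edge sets sit disjointly inside the induced graph of G
  set B : Finset (Sym2 ↥S) := (G.induce S).edgeFinset with hB
  have hsubB : ∀ i : Fin r, ((F i).induce S).edgeFinset ⊆ B := by
    intro i
    apply edgeFinset_mono
    intro a b hab
    exact hval.le i hab
  have e0 : Sym2 ↥S := s(⟨x, hxS⟩, ⟨y, hyS⟩)
  have he0B : s((⟨x, hxS⟩ : ↥S), ⟨y, hyS⟩) ∈ B := by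
    rw [hB, mem_edgeFinset]
    exact (mem_edgeSet _).2 hGxy
  have he0A : ∀ i : Fin r, s((⟨x, hxS⟩ : ↥S), ⟨y, hyS⟩) ∉ ((F i).induce S).edgeFinset := by
    intro i hmem
    rw [mem_edgeFinset] at hmem
    exact hval.nxy i ((mem_edgeSet _).1 hmem)
  have hdisj : ∀ i ∈ (Finset.univ : Finset (Fin r)), ∀ j ∈ Finset.univ, i ≠ j →
      Disjoint ((F i).induce S).edgeFinset ((F j).induce S).edgeFinset := by
    intro i _ j _ hij
    rw [Finset.disjoint_left]
    intro e hei hej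
    rw [mem_edgeFinset] at hei hej
    induction e with
    | _ a b =>
      exact hval.disj i j hij a b ⟨(mem_edgeSet _).1 hei, (mem_edgeSet _).1 hej⟩
  have hbig : Finset.univ.biUnion (fun i : Fin r => ((F i).induce S).edgeFinset) ⊆ B :=
    Finset.biUnion_subset.2 (fun i _ => hsubB i)
  have hcount : r * (Fintype.card ↥S - 1) + 1 ≤ B.card := by
    have h1 : (Finset.univ.biUnion (fun i : Fin r => ((F i).induce S).edgeFinset)).card
        = r * (Fintype.card ↥S - 1) := by
      rw [Finset.card_biUnion hdisj]
      have : ∀ i : Fin r, ((F i).induce S).edgeFinset.card = Fintype.card ↥S - 1 := by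
        intro i
        have := hcard i
        omega
      rw [Finset.sum_congr rfl (fun i _ => this i)]
      simp [Finset.sum_const, Finset.card_univ]
    have h2 : insert (s((⟨x, hxS⟩ : ↥S), ⟨y, hyS⟩))
        (Finset.univ.biUnion (fun i : Fin r => ((F i).induce S).edgeFinset)) ⊆ B := by
      intro e he
      rw [Finset.mem_insert] at he
      rcases he with rfl | he
      · exact he0B
      · exact hbig he
    have h3 := Finset.card_le_card h2
    rw [Finset.card_insert_of_notMem (by
      intro hmem
      rw [Finset.mem_biUnion] at hmem
      obtain ⟨i, _, hmem⟩ := hmem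
      exact he0A i hmem), h1] at h3
    omega
  -- density bound
  have hdb := hdens S ⟨x, hxS⟩
  have hnc1 : Nat.card (SimpleGraph.induce S G).edgeSet = B.card := by
    rw [Nat.card_eq_fintype_card, hB]
    exact (Set.toFinset_card _).symm
  have hnc2 : Nat.card ↥S = Fintype.card ↥S := Nat.card_eq_fintype_card
  rw [hnc1, hnc2] at hdb
  have hSpos : 1 ≤ Fintype.card ↥S := Fintype.card_pos_iff.2 ⟨⟨x, hxS⟩⟩
  omega

end Fail

section Main

variable [Fintype V]

lemma nashWilliams (r : ℕ) : ∀ (G : SimpleGraph V), Density G r →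
    ∃ F : Fin r → SimpleGraph V, FullDecomp G r F := by
  classical
  have main : ∀ (n : ℕ) (G : SimpleGraph V), Nat.card G.edgeSet = n → Density G r →
      ∃ F : Fin r → SimpleGraph V, FullDecomp G r F := by
    intro n
    induction n using Nat.strong_induction_on with
    | _ n IH =>
    intro G hn hdens
    by_cases hE : ∃ x y, G.Adj x y
    · obtain ⟨x, y, hGxy⟩ := hE
      set G' : SimpleGraph V := G \ fromEdgeSet {s(x, y)} with hG'
      have hsub : G'.edgeSet ⊆ G.edgeSet := edgeSet_mono sdiff_le
      have hmem : s(x, y) ∈ G.edgeSet := hGxy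
      have hnmem : s(x, y) ∉ G'.edgeSet := by
        rw [mem_edgeSet, hG']
        rw [sdiff_edge_adj]
        tauto
      have hlt : Nat.card G'.edgeSet < n := by
        rw [← hn]
        rw [Nat.card_coe_set_eq, Nat.card_coe_set_eq]
        refine Set.ncard_lt_ncard ⟨hsub, fun hs => hnmem (hs hmem)⟩ (Set.toFinite _)
      have hdens' : Density G' r := by
        intro s hs
        refine le_trans ?_ (hdens s hs)
        rw [Nat.card_coe_set_eq, Nat.card_coe_set_eq]
        refine Set.ncard_le_ncard ?_ (Set.toFinite _)
        exact edgeSet_mono (fun a b hab => sdiff_le (a := G) (b := fromEdgeSet {s(x, y)}) hab)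
      obtain ⟨F', hF'⟩ := IH _ hlt G' rfl hdens'
      have hG'adj : ∀ a b, G'.Adj a b ↔ G.Adj a b ∧ s(a, b) ≠ s(x, y) := by
        intro a b; rw [hG']; exact sdiff_edge_adj G _ a b
      have hval : NWValid G x y F' := by
        constructor
        · exact fun i => le_trans (hF'.1 i) sdiff_le
        · exact fun i => hF'.2.1 i
        · intro i h
          have := hF'.1 i h
          rw [hG'adj] at this
          exact this.2 rfl
        · intro u v huv hne
          exact hF'.2.2.1 u v ((hG'adj u v).2 ⟨huv, hne⟩)
        · exact hF'.2.2.2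
      by_cases haug : ∃ t u v, RSeq F' x y t u v ∧ ∃ j, ¬ (F' j).Reachable u v
      · obtain ⟨t, u, v, hseq, hins⟩ := haug
        exact augment hGxy t F' hval u v hseq hins
      · exfalso
        push_neg at haug
        refine fail_contra hGxy hval ?_ hdens
        intro t u v hseq j
        exact haug t u v hseq j
    · push_neg at hE
      refine ⟨fun _ => ⊥, fun i => bot_le, fun i => isAcyclic_bot, ?_, ?_⟩
      · intro u v huv; exact absurd huv (hE u v)
      · intro i j _ u v ⟨h1, _⟩; exact h1.elim
  intro G hdens
  exact main _ G rfl hdens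

end Main

open SimpleGraph

namespace NWaux

lemma Link.flip_flip {m n : ℕ} (l : Link m n) : l.flip.flip = l := by
  cases l <;> rfl

def linkEquiv (m n : ℕ) : Link m n ≃ (Fin m ⊕ Fin m ⊕ Fin n) where
  toFun l := match l with
    | .arcOut c => Sum.inl c
    | .arcIn c => Sum.inr (Sum.inl c)
    | .edge c => Sum.inr (Sum.inr c)
  invFun x := match x with
    | Sum.inl c => .arcOut c
    | Sum.inr (Sum.inl c) => .arcIn c
    | Sum.inr (Sum.inr c) => .edge c
  left_inv l := by cases l <;> rfl
  right_inv x := by rcases x with c | c | c <;> rfl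

noncomputable instance {m n : ℕ} : Fintype (Link m n) :=
  Fintype.ofEquiv _ (linkEquiv m n).symm

lemma card_link (m n : ℕ) : Fintype.card (Link m n) = 2 * m + n := by
  rw [Fintype.card_congr (linkEquiv m n)]
  simp [Fintype.card_sum]
  omega

def defaultLink (m n : ℕ) (hp : 2 ≤ 2 * m + n) : Link m n :=
  if h : 0 < m then .arcOut ⟨0, h⟩ else .edge ⟨0, by omega⟩

section Build

attribute [local instance] Classical.propDecidable

variable {m n : ℕ} {V : Type} [LinearOrder V]

noncomputable def baseFun (hp : 2 ≤ 2 * m + n) (G : SimpleGraph V) (s : Set V) (χ : ↥(G.induce s).edgeSet → Link m n) (u v : V) : Link m n :=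
  if h : u ∈ s ∧ v ∈ s ∧ G.Adj u v then
    χ ⟨s(⟨u, h.1⟩, ⟨v, h.2.1⟩), (SimpleGraph.mem_edgeSet _).2 h.2.2⟩
  else defaultLink m n hp

lemma baseFun_symm (hp : 2 ≤ 2 * m + n) (G : SimpleGraph V) (s : Set V)
    (χ : ↥(G.induce s).edgeSet → Link m n) (u v : V) :
    baseFun hp G s χ u v = baseFun hp G s χ v u := by
  by_cases h : u ∈ s ∧ v ∈ s ∧ G.Adj u v
  · have h' : v ∈ s ∧ u ∈ s ∧ G.Adj v u := ⟨h.2.1, h.1, h.2.2.symm⟩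
    rw [baseFun, baseFun, dif_pos h, dif_pos h']
    congr 1
    exact Subtype.ext (Sym2.eq_swap)
  · have h' : ¬ (v ∈ s ∧ u ∈ s ∧ G.Adj v u) := by
      intro hc; exact h ⟨hc.2.1, hc.1, hc.2.2.symm⟩
    rw [baseFun, baseFun, dif_neg h, dif_neg h']

noncomputable def mkM (hp : 2 ≤ 2 * m + n) (G : SimpleGraph V) (s : Set V)
    (χ : ↥(G.induce s).edgeSet → Link m n) : CMGraph m n V where
  link u v := if hA : G.Adj u v then
      some (if u < v then baseFun hp G s χ u v else (baseFun hp G s χ v u).flip)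
    else none
  symm u v := by
    by_cases hA : G.Adj u v
    · have hA' : G.Adj v u := hA.symm
      rw [dif_pos hA, dif_pos hA']
      rcases lt_trichotomy u v with hlt | heq | hgt
      · rw [if_pos hlt, if_neg (asymm hlt)]
        rfl
      · exact absurd heq hA.ne
      · rw [if_neg (asymm hgt), if_pos hgt]
        simp [Link.flip_flip]
    · have hA' : ¬ G.Adj v u := fun hc => hA hc.symm
      rw [dif_neg hA, dif_neg hA']
      rfl
  loopless v := dif_neg (G.irrefl)

lemma mkM_underlying (hp : 2 ≤ 2 * m + n) (G : SimpleGraph V) (s : Set V)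
    (χ : ↥(G.induce s).edgeSet → Link m n) :
    (mkM hp G s χ).underlying = G := by
  ext u v
  show (Option.isSome _) = true ↔ _
  by_cases hA : G.Adj u v
  · simp [mkM, dif_pos hA, hA]
  · simp [mkM, dif_neg hA, hA]

lemma mkM_link_eq (hp : 2 ≤ 2 * m + n) (G : SimpleGraph V) (s : Set V)
    (χ : ↥(G.induce s).edgeSet → Link m n) {u v : V}
    (hu : u ∈ s) (hv : v ∈ s) (hA : G.Adj u v) (hlt : u < v)
    (hmem : s((⟨u, hu⟩ : ↥s), ⟨v, hv⟩) ∈ (G.induce s).edgeSet) :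
    (mkM hp G s χ).link u v = some (χ ⟨_, hmem⟩) := by
  show (if hA' : G.Adj u v then _ else none) = _
  rw [dif_pos hA, if_pos hlt]
  congr 1
  rw [baseFun, dif_pos ⟨hu, hv, hA⟩]

end Build

end NWaux

namespace NWaux

section Count

attribute [local instance] Classical.propDecidable

lemma card_tpairs (k : ℕ) : Fintype.card {p : Fin k × Fin k // p.1 < p.2} * 2 = k * (k - 1) := by
  have e : {p : Fin k × Fin k // p.1 < p.2} ≃ (Σ j : Fin k, Fin j.val) :=
    { toFun := fun q => ⟨q.1.2, ⟨q.1.1.val, q.2⟩⟩,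
      invFun := fun p => ⟨(⟨p.2.val, lt_trans p.2.isLt p.1.isLt⟩, p.1), p.2.isLt⟩,
      left_inv := fun q => rfl,
      right_inv := fun p => rfl }
  rw [Fintype.card_congr e, Fintype.card_sigma]
  have : ∀ j : Fin k, Fintype.card (Fin j.val) = j.val := fun j => Fintype.card_fin _
  rw [Finset.sum_congr rfl (fun j _ => this j), Fin.sum_univ_eq_sum_range (fun i => i) k]
  exact Finset.sum_range_id_mul_two k

variable {m n : ℕ} {V : Type}

lemma count_le {k : ℕ} (hp : 2 ≤ 2 * m + n) [Fintype V] [LinearOrder V] [Nonempty V]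
    (G : SimpleGraph V)
    (h : ∀ M : CMGraph m n V, M.underlying = G → CMChromAtMost M k)
    (s : Set V) :
    (2 * m + n) ^ (Fintype.card ↥(G.induce s).edgeSet) ≤
      k ^ (Fintype.card ↥s) * (2 * m + n) ^ (Fintype.card {p : Fin k × Fin k // p.1 < p.2}) := by
  classical
  set E := ↥(G.induce s).edgeSet with hE
  have hAll : ∀ χ : E → Link m n, CMChromAtMost (mkM hp G s χ) k :=
    fun χ => h (mkM hp G s χ) (mkM_underlying hp G s χ)
  choose W instW H f hcard hhom using hAll
  haveI hWne : ∀ χ, Nonempty (W χ) := fun χ => ⟨f χ (Classical.arbitrary V)⟩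
  let ι : ∀ χ, W χ → Fin k := fun χ w =>
    Fin.castLE (hcard χ) ((@Fintype.equivFin _ (instW χ)) w)
  have hι : ∀ χ, Function.Injective (ι χ) := by
    intro χ a b hab
    exact (@Fintype.equivFin _ (instW χ)).injective (Fin.castLE_injective _ hab)
  let iv : ∀ χ, Fin k → W χ := fun χ => Function.invFun (ι χ)
  have hleft : ∀ χ w, iv χ (ι χ w) = w := fun χ => Function.leftInverse_invFun (hι χ)
  let Φ : (E → Link m n) →
      ((↥s → Fin k) × ({p : Fin k × Fin k // p.1 < p.2} → Link m n)) :=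
    fun χ => (fun z => ι χ (f χ z.val),
      fun q => ((H χ).link (iv χ q.1.1) (iv χ q.1.2)).getD (defaultLink m n hp))
  have hinj : Function.Injective Φ := by
    intro χ1 χ2 heq
    have heq1 : ∀ z : ↥s, ι χ1 (f χ1 z.val) = ι χ2 (f χ2 z.val) :=
      fun z => congrFun (congrArg Prod.fst heq) z
    have heq2 : ∀ q : {p : Fin k × Fin k // p.1 < p.2},
        ((H χ1).link (iv χ1 q.1.1) (iv χ1 q.1.2)).getD (defaultLink m n hp) =
        ((H χ2).link (iv χ2 q.1.1) (iv χ2 q.1.2)).getD (defaultLink m n hp) :=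
      fun q => congrFun (congrArg Prod.snd heq) q
    have claim : ∀ (z1 z2 : ↥s) (hmem : s(z1, z2) ∈ (G.induce s).edgeSet),
        z1.val < z2.val → χ1 ⟨s(z1, z2), hmem⟩ = χ2 ⟨s(z1, z2), hmem⟩ := by
      intro z1 z2 hmem hlt
      have hadj : G.Adj z1.val z2.val := (SimpleGraph.mem_edgeSet _).1 hmem
      set e : E := ⟨s(z1, z2), hmem⟩ with he
      have hlk : ∀ χ : E → Link m n,
          (mkM hp G s χ).link z1.val z2.val = some (χ e) := by
        intro χ
        exact mkM_link_eq hp G s χ z1.2 z2.2 hadj hlt hmem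
      have hH1 : (H χ1).link (f χ1 z1.val) (f χ1 z2.val) = some (χ1 e) :=
        hhom χ1 z1.val z2.val (χ1 e) (hlk χ1)
      have hH2 : (H χ2).link (f χ2 z1.val) (f χ2 z2.val) = some (χ2 e) :=
        hhom χ2 z1.val z2.val (χ2 e) (hlk χ2)
      have hfne1 : f χ1 z1.val ≠ f χ1 z2.val := by
        intro hfe
        rw [hfe, (H χ1).loopless] at hH1
        cases hH1
      set A := ι χ1 (f χ1 z1.val) with hA
      set B := ι χ1 (f χ1 z2.val) with hB
      have hA2 : A = ι χ2 (f χ2 z1.val) := heq1 z1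
      have hB2 : B = ι χ2 (f χ2 z2.val) := heq1 z2
      have hABne : A ≠ B := fun hab => hfne1 (hι χ1 hab)
      have hiv1A : iv χ1 A = f χ1 z1.val := hleft χ1 _
      have hiv1B : iv χ1 B = f χ1 z2.val := hleft χ1 _
      have hiv2A : iv χ2 A = f χ2 z1.val := by rw [hA2]; exact hleft χ2 _
      have hiv2B : iv χ2 B = f χ2 z2.val := by rw [hB2]; exact hleft χ2 _
      rcases lt_or_gt_of_ne hABne with hlt2 | hgt2
      · have h2 := heq2 ⟨(A, B), hlt2⟩
        simp only at h2
        rw [hiv1A, hiv1B, hiv2A, hiv2B, hH1, hH2] at h2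
        simpa using h2
      · have h2 := heq2 ⟨(B, A), hgt2⟩
        simp only at h2
        have hH1' : (H χ1).link (f χ1 z2.val) (f χ1 z1.val) = some ((χ1 e).flip) := by
          rw [(H χ1).symm, hH1]; rfl
        have hH2' : (H χ2).link (f χ2 z2.val) (f χ2 z1.val) = some ((χ2 e).flip) := by
          rw [(H χ2).symm, hH2]; rfl
        rw [hiv1A, hiv1B, hiv2A, hiv2B, hH1', hH2'] at h2
        simp only [Option.getD_some] at h2
        have := congrArg Link.flip h2
        rwa [Link.flip_flip, Link.flip_flip] at this
    funext e
    obtain ⟨esym, hmem⟩ := e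
    induction esym with
    | _ z1 z2 =>
      have hadj : G.Adj z1.val z2.val := (SimpleGraph.mem_edgeSet _).1 hmem
      rcases lt_trichotomy z1.val z2.val with hlt | heqv | hgt
      · exact claim z1 z2 hmem hlt
      · exact absurd (Subtype.ext heqv : z1 = z2) (by rintro rfl; exact G.irrefl hadj)
      · have hswap : (⟨s(z1, z2), hmem⟩ : E) = ⟨s(z2, z1), Sym2.eq_swap ▸ hmem⟩ :=
          Subtype.ext Sym2.eq_swap
        rw [hswap]
        exact claim z2 z1 _ hgt
  have hcard2 := Fintype.card_le_of_injective Φ hinj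
  rw [Fintype.card_fun, Fintype.card_prod, Fintype.card_fun, Fintype.card_fun,
    card_link, Fintype.card_fin] at hcard2
  exact hcard2

end Count

end NWaux

namespace NWaux

section Dens

attribute [local instance] Classical.propDecidable

-- local copy of the Density predicate
def Density' {V : Type} (G : SimpleGraph V) (r : ℕ) : Prop :=
  ∀ s : Set V, s.Nonempty → Nat.card (SimpleGraph.induce s G).edgeSet ≤ r * (Nat.card s - 1)

lemma density_main (m n k : ℕ) (hp : 2 ≤ 2 * m + n) (V : Type) [Fintype V]
    (G : SimpleGraph V)
    (h : ∀ M : CMGraph m n V, M.underlying = G → CMChromAtMost M k) :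
    Density' G ⌈Real.logb (2 * m + n : ℝ) (k : ℝ) + (k : ℝ) / 2⌉₊ := by
  classical
  intro s hs
  haveI : Nonempty V := ⟨hs.some⟩
  letI : LinearOrder V := LinearOrder.lift' (Fintype.equivFin V) (Fintype.equivFin V).injective
  set p : ℕ := 2 * m + n with hpdef
  set r : ℕ := ⌈Real.logb (2 * m + n : ℝ) (k : ℝ) + (k : ℝ) / 2⌉₊ with hrdef
  set E : ℕ := Nat.card (SimpleGraph.induce s G).edgeSet with hEdef
  set v : ℕ := Nat.card ↥s with hvdef
  haveI : Nonempty ↥s := ⟨⟨hs.some, hs.some_mem⟩⟩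
  have hv1 : 1 ≤ v := Nat.card_pos
  -- dispatch k = 0
  rcases Nat.eq_zero_or_pos k with rfl | hk0
  · exfalso
    obtain ⟨W, instW, H, f, hcard, _⟩ :=
      h (mkM hp G s (fun _ => defaultLink m n hp)) (mkM_underlying hp G s _)
    have : IsEmpty W := (@Fintype.card_eq_zero_iff W instW).1 (Nat.le_zero.1 hcard)
    exact this.false (f (Classical.arbitrary V))
  -- dispatch k = 1
  rcases eq_or_lt_of_le (Nat.succ_le_of_lt hk0) with hk1 | hk2
  · -- k = 1 : G has no edges at all
    have hE0 : E = 0 := by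
      rw [hEdef, Nat.card_eq_fintype_card, Fintype.card_eq_zero_iff]
      constructor
      rintro ⟨esym, hmem⟩
      induction esym with
      | _ z1 z2 =>
        have hadj : G.Adj z1.val z2.val := (SimpleGraph.mem_edgeSet _).1 hmem
        obtain ⟨W, instW, H, f, hcard, hhom⟩ :=
          h (mkM hp G s (fun _ => defaultLink m n hp)) (mkM_underlying hp G s _)
        haveI := instW
        have hfne : f z1.val = f z2.val := by
          have hsub : Subsingleton W :=
            (@Fintype.card_le_one_iff_subsingleton W instW).1 (by omega)
          exact Subsingleton.elim _ _
        rcases lt_trichotomy z1.val z2.val with hlt | heqv | hgt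
        · have hlk := mkM_link_eq hp G s (fun _ => defaultLink m n hp) z1.2 z2.2 hadj hlt hmem
          have := hhom z1.val z2.val _ hlk
          rw [hfne, H.loopless] at this
          cases this
        · exact G.irrefl (heqv ▸ hadj)
        · have hmem' : s(z2, z1) ∈ (SimpleGraph.induce s G).edgeSet := Sym2.eq_swap ▸ hmem
          have hlk := mkM_link_eq hp G s (fun _ => defaultLink m n hp) z2.2 z1.2 hadj.symm hgt hmem'
          have := hhom z2.val z1.val _ hlk
          rw [← hfne, H.loopless] at this
          cases this
    simp [hE0]
  -- now k ≥ 2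
  have hrk : (Real.logb (2 * m + n : ℝ) (k : ℝ) + (k : ℝ) / 2) ≤ (r : ℝ) := Nat.le_ceil _
  have hp1 : (1 : ℝ) < (p : ℝ) := by
    rw [hpdef]; push_cast; norm_num
    have : (2 : ℝ) ≤ 2 * (m : ℝ) + n := by exact_mod_cast hp
    linarith
  have hL0 : 0 ≤ Real.logb (p : ℝ) (k : ℝ) := Real.logb_nonneg hp1 (by exact_mod_cast hk2.le)
  have hbase : Real.logb (2 * m + n : ℝ) (k : ℝ) = Real.logb (p : ℝ) (k : ℝ) := by
    rw [hpdef]; push_cast; ring_nf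
  set L : ℝ := Real.logb (p : ℝ) (k : ℝ) with hLdef
  -- case v small
  by_cases hvsmall : v ≤ 2 * r
  · -- E ≤ choose v 2 ≤ r (v-1)
    have hEch : E ≤ v.choose 2 := by
      rw [hEdef, Nat.card_eq_fintype_card, ← Set.toFinset_card]
      have := SimpleGraph.card_edgeFinset_le_card_choose_two (G := SimpleGraph.induce s G)
      rw [SimpleGraph.edgeFinset] at this
      convert this using 2
      rw [hvdef, Nat.card_eq_fintype_card]
    have hch : v.choose 2 * 2 = v * (v - 1) := by
      rw [Nat.choose_two_right]
      have hev : 2 ∣ v * (v - 1) := by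
        rcases Nat.even_or_odd v with he | ho
        · exact Dvd.dvd.mul_right he.two_dvd _
        · exact Dvd.dvd.mul_left (Nat.Odd.sub_odd ho odd_one).two_dvd _
      omega
    have h1 : v * (v - 1) ≤ 2 * r * (v - 1) := Nat.mul_le_mul_right _ hvsmall
    have h2 : 2 * r * (v - 1) = 2 * (r * (v - 1)) := by ring
    omega
  -- case v large
  push_neg at hvsmall
  have hcount := count_le hp G h s
  -- rewrite in terms of E, v
  rw [← hpdef] at hcount
  have hEfin : Fintype.card ↥(SimpleGraph.induce s G).edgeSet = E := by
    rw [hEdef, Nat.card_eq_fintype_card]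
  have hvfin : Fintype.card ↥s = v := by rw [hvdef, Nat.card_eq_fintype_card]
  rw [hEfin, hvfin] at hcount
  set c : ℕ := Fintype.card {p : Fin k × Fin k // p.1 < p.2} with hcdef
  have hc2 : (c : ℝ) * 2 = (k : ℝ) * ((k : ℝ) - 1) := by
    have := card_tpairs k
    rw [← hcdef] at this
    have h1 : ((c * 2 : ℕ) : ℝ) = ((k * (k - 1) : ℕ) : ℝ) := by exact_mod_cast this
    push_cast [Nat.cast_sub (by omega : 1 ≤ k)] at h1
    push_cast
    linarith
  -- take logb
  have hcast : ((p : ℝ)) ^ E ≤ (k : ℝ) ^ v * (p : ℝ) ^ c := by exact_mod_cast hcount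
  have hppos : (0 : ℝ) < (p : ℝ) ^ E := by positivity
  have hlog := (Real.logb_le_logb_of_le hp1 hppos hcast)
  rw [Real.logb_pow] at hlog
  rw [Real.logb_mul (by positivity) (by positivity), Real.logb_pow, Real.logb_pow,
    Real.logb_self_eq_one hp1] at hlog
  -- hlog : E * 1 ≤ v * L + c * 1
  have hElog : (E : ℝ) ≤ (v : ℝ) * L + (c : ℝ) := by
    rw [← hLdef] at hlog
    linarith
  -- final arithmetic
  have hrL : L + (k : ℝ) / 2 ≤ (r : ℝ) := by rw [← hbase]; exact hrk
  have hvlarge : (2 * r + 1 : ℝ) ≤ (v : ℝ) := by exact_mod_cast hvsmall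
  have hk2' : (2 : ℝ) ≤ (k : ℝ) := by exact_mod_cast hk2
  have hgoal : (E : ℝ) ≤ (r : ℝ) * ((v : ℝ) - 1) := by
    nlinarith [mul_nonneg hL0 (sub_nonneg.2 hk2'), mul_nonneg hL0 hL0,
      mul_nonneg (le_of_lt (lt_of_lt_of_le one_pos (by linarith : (1:ℝ) ≤ (k:ℝ)))) hL0]
  have hcastgoal : ((r * (v - 1) : ℕ) : ℝ) = (r : ℝ) * ((v : ℝ) - 1) := by
    push_cast [Nat.cast_sub hv1]
    ring
  have : (E : ℝ) ≤ ((r * (v - 1) : ℕ) : ℝ) := by rw [hcastgoal]; exact hgoal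
  exact_mod_cast this

end Dens

end NWaux

/-- If every `(m,n)`-colored mixed graph with underlying graph `G`
admits a homomorphism to some `(m,n)`-colored mixed graph on at most `k` vertices,
then `arb(G) ≤ ⌈log_p k + k/2⌉` where `p = 2m+n ≥ 2`. -/
theorem arboricity_le_of_mixed_chromatic (m n k : ℕ) (hp : 2 ≤ 2 * m + n)
    (V : Type) [Fintype V] (G : SimpleGraph V)
    (h : ∀ M : CMGraph m n V, M.underlying = G → CMChromAtMost M k) :
    ArbAtMost G ⌈Real.logb (2 * m + n : ℝ) (k : ℝ) + (k : ℝ) / 2⌉₊ := by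
  classical
  have hdens := NWaux.density_main m n k hp V G h
  obtain ⟨F, hF⟩ := nashWilliams _ G (fun s hs => hdens s hs)
  exact ⟨F, hF.1, hF.2.1, hF.2.2.1, hF.2.2.2⟩
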